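/- The homomorphic rewrite relation on the message algebra is locally confluent: if m → m₁ and m → m₂, then there exists a message m₃ with m₁ →* m₃ and m₂ →* m₃, where →* denotes the reflexive–transitive closure of →. -/
import Mathlib


/-- Messages: the free term algebra generated by atoms under pairing and
encryption with atomic keys. -/
inductive Msg (A : Type) : Type
  | atom : A → Msg A
  | pair : Msg A → Msg A → Msg A
  | enc : Msg A → A → Msg A

/-- The homomorphic rewrite relation: smallest relation containing every
instance of `{m·m'}_k → {m}_k·{m'}_k` and closed under contexts. -/
inductive Rw {A : Type} : Msg A → Msg A → Prop
  | homo (m m' : Msg A) (k : A) :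
      Rw (.enc (.pair m m') k) (.pair (.enc m k) (.enc m' k))
  | pairL {m m' : Msg A} (n : Msg A) : Rw m m' → Rw (.pair m n) (.pair m' n)
  | pairR {m m' : Msg A} (n : Msg A) : Rw m m' → Rw (.pair n m) (.pair n m')
  | enc {m m' : Msg A} (k : A) : Rw m m' → Rw (.enc m k) (.enc m' k)

private lemma rtg_pairL {A : Type} {m m' : Msg A} (n : Msg A)
    (h : Relation.ReflTransGen Rw m m') :
    Relation.ReflTransGen Rw (.pair m n) (.pair m' n) := by
  induction h with
  | refl => exact .refl
  | tail _ h ih => exact ih.tail (.pairL n h)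

private lemma rtg_pairR {A : Type} {m m' : Msg A} (n : Msg A)
    (h : Relation.ReflTransGen Rw m m') :
    Relation.ReflTransGen Rw (.pair n m) (.pair n m') := by
  induction h with
  | refl => exact .refl
  | tail _ h ih => exact ih.tail (.pairR n h)

private lemma rtg_enc {A : Type} {m m' : Msg A} (k : A)
    (h : Relation.ReflTransGen Rw m m') :
    Relation.ReflTransGen Rw (.enc m k) (.enc m' k) := by
  induction h with
  | refl => exact .refl
  | tail _ h ih => exact ih.tail (.enc k h)

/-- Local confluence of the homomorphic rewrite relation. -/
theorem homomorphic_rewrite_locally_confluent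
    (A : Type) [Countable A] (m m₁ m₂ : Msg A)
    (h₁ : Rw m m₁) (h₂ : Rw m m₂) :
    ∃ m₃ : Msg A,
      Relation.ReflTransGen Rw m₁ m₃ ∧ Relation.ReflTransGen Rw m₂ m₃ := by
  induction h₁ generalizing m₂ with
  | homo a b k =>
    cases h₂ with
    | homo => exact ⟨_, .refl, .refl⟩
    | enc k h =>
      cases h with
      | pairL _ h' =>
        exact ⟨_,
          Relation.ReflTransGen.single (.pairL _ (.enc k h')),
          Relation.ReflTransGen.single (.homo _ _ k)⟩
      | pairR _ h' =>
        exact ⟨_,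
          Relation.ReflTransGen.single (.pairR _ (.enc k h')),
          Relation.ReflTransGen.single (.homo _ _ k)⟩
  | pairL n h ih =>
    cases h₂ with
    | pairL n h' =>
      obtain ⟨w, hw1, hw2⟩ := ih _ h'
      exact ⟨.pair w n, rtg_pairL n hw1, rtg_pairL n hw2⟩
    | pairR n h' =>
      exact ⟨.pair _ _, Relation.ReflTransGen.single (.pairR _ h'),
        Relation.ReflTransGen.single (.pairL _ h)⟩
  | pairR n h ih =>
    cases h₂ with
    | pairL n h' =>
      exact ⟨.pair _ _, Relation.ReflTransGen.single (.pairL _ h'),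
        Relation.ReflTransGen.single (.pairR _ h)⟩
    | pairR n h' =>
      obtain ⟨w, hw1, hw2⟩ := ih _ h'
      exact ⟨.pair n w, rtg_pairR n hw1, rtg_pairR n hw2⟩
  | enc k h ih =>
    cases h₂ with
    | homo =>
      cases h with
      | pairL _ h' =>
        exact ⟨_,
          Relation.ReflTransGen.single (.homo _ _ k),
          Relation.ReflTransGen.single (.pairL _ (.enc k h'))⟩
      | pairR _ h' =>
        exact ⟨_,
          Relation.ReflTransGen.single (.homo _ _ k),
          Relation.ReflTransGen.single (.pairR _ (.enc k h'))⟩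
    | enc k h' =>
      obtain ⟨w, hw1, hw2⟩ := ih _ h'
      exact ⟨.enc w k, rtg_enc k hw1, rtg_enc k hw2⟩
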